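/- Let t ≥ 0 be an integer, and D_0,…,D_t real numbers with D_{t+1} = 0. Suppose N(X) = Σ_{i=0}^{t} D_i X^{a}(log X^{a})^i + O(X^{a−1}(log^+ X)^t) for a real a > 1 and all X ≥ 1. Then ζ(s) = s∫_1^∞ N(X) X^{−s−1} dX (equal to Σ H(α)^{−s} by partial summation) extends meromorphically to Re(s) > a − 1 with a single pole at s = a of order t+1, and the principal part of the Laurent expansion at s = a is Σ_{i=1}^{t+1} a^i (i−1)! (D_{i−1} + i D_i) / (s−a)^i. -/

import Mathlib

open MeasureTheory

open MeasureTheory Set Filter Real Asymptotics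

lemma st19_intAux (j : ℕ) {σ : ℝ} (hσ : σ < -1) :
    IntegrableOn (fun X : ℝ => (max 1 (Real.log X)) ^ j * X ^ σ) (Set.Ioi 1) := by
  set σ' : ℝ := (σ - 1) / 2 with hσ'def
  have hσ' : σ' < -1 := by rw [hσ'def]; linarith
  have hσσ' : 0 < σ' - σ := by rw [hσ'def]; linarith
  have cont : ContinuousOn (fun X : ℝ => (max 1 (Real.log X)) ^ j * X ^ σ) (Set.Ici 1) := by
    apply ContinuousOn.mul
    · refine ContinuousOn.pow ?_ j
      refine ContinuousOn.sup' continuousOn_const (Real.continuousOn_log.mono ?_)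
      intro x hx; simp only [mem_Ici] at hx
      simp only [mem_compl_iff, mem_singleton_iff]
      intro h; rw [h] at hx; linarith
    · intro x hx
      exact (Real.continuousAt_rpow_const x σ (Or.inl (by simp only [mem_Ici] at hx; linarith))).continuousWithinAt
  have hloc : LocallyIntegrableOn (fun X : ℝ => (max 1 (Real.log X)) ^ j * X ^ σ) (Set.Ici 1) :=
    cont.locallyIntegrableOn measurableSet_Ici
  have hlog : (fun x : ℝ => (Real.log x) ^ j) =o[atTop] fun x => x ^ (σ' - σ) := by
    have := isLittleO_log_rpow_rpow_atTop (s := σ' - σ) (j : ℝ) hσσ'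
    refine this.congr' (by filter_upwards with x using by rw [Real.rpow_natCast]) (by rfl)
  have hO : (fun X : ℝ => (max 1 (Real.log X)) ^ j * X ^ σ) =O[atTop] fun x => x ^ σ' := by
    have h1 : (fun x : ℝ => (Real.log x) ^ j * x ^ σ) =O[atTop] fun x => x ^ (σ' - σ) * x ^ σ :=
      hlog.isBigO.mul (isBigO_refl _ _)
    have h2 : (fun x : ℝ => x ^ (σ' - σ) * x ^ σ) =ᶠ[atTop] fun x => x ^ σ' := by
      filter_upwards [eventually_gt_atTop (0:ℝ)] with x hx
      rw [← Real.rpow_add hx]; ring_nf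
    refine ((h1.congr' ?_ h2))
    filter_upwards [eventually_ge_atTop (Real.exp 1)] with x hx
    have : (1:ℝ) ≤ Real.log x := by
      rw [← Real.log_exp 1]; exact Real.log_le_log (Real.exp_pos 1) hx
    rw [max_eq_right this]
  have hg : IntegrableAtFilter (fun x : ℝ => x ^ σ') atTop :=
    ⟨Set.Ioi 1, Ioi_mem_atTop 1, integrableOn_Ioi_rpow_of_lt hσ' one_pos⟩
  exact (hloc.integrableOn_of_isBigO_atTop hO hg).mono_set Set.Ioi_subset_Ici_self

lemma st19_contC (c : ℂ) : ContinuousOn (fun X : ℝ => (X : ℂ) ^ c) (Set.Ioi 1) := by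
  intro x hx
  exact (Complex.continuousAt_ofReal_cpow_const x c
    (Or.inr (by simp only [mem_Ioi] at hx; linarith))).continuousWithinAt

lemma st19_normC {c : ℂ} {X : ℝ} (hX : 1 < X) (i : ℕ) :
    ‖(Real.log X : ℂ) ^ i * (X : ℂ) ^ c‖ = (Real.log X) ^ i * X ^ c.re := by
  have hX0 : (0:ℝ) < X := by linarith
  have hl : (0:ℝ) ≤ Real.log X := Real.log_nonneg hX.le
  rw [norm_mul, norm_pow, Complex.norm_real, Real.norm_eq_abs, abs_of_nonneg hl,
    Complex.norm_cpow_eq_rpow_re_of_pos hX0]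

lemma st19_intC (i : ℕ) {r : ℂ} (hr : 0 < r.re) :
    IntegrableOn (fun X : ℝ => (Real.log X : ℂ) ^ i * (X : ℂ) ^ (-r - 1)) (Set.Ioi 1) := by
  have hσ : (-r - 1).re < -1 := by
    simp only [Complex.sub_re, Complex.neg_re, Complex.one_re]; linarith
  refine Integrable.mono' ((st19_intAux i hσ)) ?_ ?_
  · exact (((Complex.continuous_ofReal.comp_continuousOn (Real.continuousOn_log.mono (by
      intro x hx; simp only [mem_Ioi] at hx
      simp only [mem_compl_iff, mem_singleton_iff]; intro h; rw [h] at hx; linarith))).pow i).mul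
      (st19_contC (-r-1))).aestronglyMeasurable measurableSet_Ioi
  · filter_upwards [ae_restrict_mem measurableSet_Ioi] with X hX
    rw [st19_normC hX i]
    have hl : (0:ℝ) ≤ Real.log X := Real.log_nonneg hX.out.le
    have hrp : (0:ℝ) ≤ X ^ (-r-1).re := Real.rpow_nonneg (by linarith [hX.out]) _
    exact mul_le_mul_of_nonneg_right (pow_le_pow_left₀ hl (le_max_right 1 _) i) hrp

lemma st19_tend (k : ℕ) {ρ : ℝ} (hρ : 0 < ρ) :
    Filter.Tendsto (fun x : ℝ => (Real.log x) ^ k * x ^ (-ρ)) atTop (nhds 0) := by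
  have h := (isLittleO_log_rpow_rpow_atTop (s := ρ) (k : ℝ) hρ).tendsto_div_nhds_zero
  refine h.congr' ?_
  filter_upwards [eventually_gt_atTop (0:ℝ)] with x hx
  rw [Real.rpow_natCast, Real.rpow_neg hx.le, div_eq_mul_inv]

lemma st19_key (i : ℕ) {r : ℂ} (hr : 0 < r.re) :
    ∫ X in Set.Ioi (1:ℝ), (Real.log X : ℂ) ^ i * (X : ℂ) ^ (-r - 1)
      = (i.factorial : ℂ) / r ^ (i + 1) := by
  have hr0 : r ≠ 0 := fun h => by simp [h] at hr
  have hrne : -r - 1 ≠ -1 := fun h => hr0 (by linear_combination -h)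
  induction i with
  | zero =>
    have hders : ∀ x ∈ Set.Ici (1:ℝ), HasDerivAt (fun y : ℝ => (y:ℂ) ^ (-r) / (-r))
        ((x:ℂ) ^ (-r - 1)) x := by
      intro x hx
      have hx0 : x ≠ 0 := by simp only [mem_Ici] at hx; linarith
      have h := hasDerivAt_ofReal_cpow_const' hx0 hrne
      rw [show -r - 1 + 1 = -r by ring] at h
      exact h
    have hσ : (-r - 1).re < -1 := by
      simp only [Complex.sub_re, Complex.neg_re, Complex.one_re]; linarith
    have htend : Filter.Tendsto (fun x : ℝ => (x:ℂ) ^ (-r) / (-r)) atTop (nhds 0) := by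
      rw [tendsto_zero_iff_norm_tendsto_zero]
      have hb : Filter.Tendsto (fun x : ℝ => (Real.log x) ^ 0 * x ^ (-r.re) / ‖(-r : ℂ)‖)
          atTop (nhds 0) := by
        simpa using (st19_tend 0 hr).div_const ‖(-r : ℂ)‖
      refine hb.congr' ?_
      filter_upwards [eventually_gt_atTop (1:ℝ)] with x hx
      rw [norm_div]
      congr 1
      have := st19_normC (c := -r) hx 0
      simp only [pow_zero, one_mul] at this ⊢
      rw [this, Complex.neg_re]
    have h0 := integral_Ioi_of_hasDerivAt_of_tendsto' hders
      (integrableOn_Ioi_cpow_of_lt hσ one_pos) htend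
    simp only [pow_zero, one_mul]
    rw [h0]
    simp only [Complex.ofReal_one, Complex.one_cpow, Nat.factorial_zero, Nat.cast_one, pow_one]
    field_simp
    ring
  | succ n ih =>
    have hG : ∀ x ∈ Set.Ici (1:ℝ), HasDerivAt
        (fun y : ℝ => (Real.log y : ℂ) ^ (n+1) * (y:ℂ) ^ (-r) / (-r))
        ((Real.log x : ℂ) ^ (n+1) * (x:ℂ) ^ (-r - 1)
          - ((n+1 : ℂ)/r) * ((Real.log x : ℂ) ^ n * (x:ℂ) ^ (-r - 1))) x := by
      intro x hx
      have hx0 : (0:ℝ) < x := lt_of_lt_of_le one_pos hx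
      have hlog : HasDerivAt (fun y : ℝ => ((Real.log y : ℝ) : ℂ)) ((x⁻¹ : ℝ) : ℂ) x :=
        (Real.hasDerivAt_log hx0.ne').ofReal_comp
      have hpow : HasDerivAt (fun y : ℝ => (Real.log y : ℂ) ^ (n+1))
          ((((n+1 : ℕ) : ℝ) * Real.log x ^ n * x⁻¹ : ℝ) : ℂ) x := by
        have hpowR := (Real.hasDerivAt_log hx0.ne').pow (n+1)
        simp only [Nat.add_sub_cancel] at hpowR
        have h3 := hpowR.ofReal_comp
        have heq2 : (fun y : ℝ => ((Real.log y ^ (n+1) : ℝ) : ℂ))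
            = fun y : ℝ => (Real.log y : ℂ) ^ (n+1) := by
          funext y; push_cast; ring
        convert h3 using 1; exact heq2.symm
      have hcp : HasDerivAt (fun y : ℝ => (y:ℂ) ^ (-r)) (-r * (x:ℂ) ^ (-r - 1)) x := by
        have h := hasDerivAt_ofReal_cpow_const' hx0.ne' hrne
        rw [show -r - 1 + 1 = -r by ring] at h
        have h2 := h.const_mul (-r)
        have heq : (fun y : ℝ => -r * ((y:ℂ) ^ (-r) / (-r))) = fun y : ℝ => (y:ℂ) ^ (-r) := by
          funext y; field_simp
        rwa [heq] at h2
      have hmul := (hpow.mul hcp).div_const (-r)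
      refine hmul.congr_deriv ?_
      have hxinv : (x:ℂ) ^ (-r - 1) = ((x⁻¹ : ℝ) : ℂ) * (x:ℂ) ^ (-r) := by
        rw [Complex.ofReal_inv, show -r - 1 = (-1) + (-r) by ring,
          Complex.cpow_add _ _ (Complex.ofReal_ne_zero.mpr hx0.ne'), Complex.cpow_neg_one]
      rw [hxinv]
      have hxC : (x:ℂ) ≠ 0 := Complex.ofReal_ne_zero.mpr hx0.ne'
      push_cast
      field_simp
      ring
    have htend : Filter.Tendsto (fun x : ℝ => (Real.log x : ℂ) ^ (n+1) * (x:ℂ) ^ (-r) / (-r))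
        atTop (nhds 0) := by
      rw [tendsto_zero_iff_norm_tendsto_zero]
      have hb := (st19_tend (n+1) hr).div_const ‖(-r : ℂ)‖
      rw [show (0:ℝ)/‖(-r:ℂ)‖ = 0 by simp] at hb
      refine hb.congr' ?_
      filter_upwards [eventually_gt_atTop (1:ℝ)] with x hx
      rw [norm_div]
      congr 1
      have := st19_normC (c := -r) hx (n+1)
      rw [this, Complex.neg_re]
    have hint1 := st19_intC (n+1) hr
    have hint2 := (st19_intC n hr).const_mul ((n+1 : ℂ)/r)
    have h0 := integral_Ioi_of_hasDerivAt_of_tendsto' hG (hint1.sub hint2) htend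
    rw [show ((Real.log (1:ℝ) : ℂ)) ^ (n+1) * ((1:ℝ):ℂ) ^ (-r) / (-r) = 0 by simp] at h0
    rw [integral_sub hint1 hint2, MeasureTheory.integral_const_mul, ih, sub_zero] at h0
    have heq : ∫ X in Set.Ioi (1:ℝ), (Real.log X : ℂ) ^ (n+1) * (X:ℂ) ^ (-r - 1)
        = ((n+1 : ℂ)/r) * ((n.factorial : ℂ) / r ^ (n + 1)) := by
      linear_combination h0
    rw [heq, Nat.factorial_succ]
    push_cast
    rw [div_mul_div_comm, ← pow_succ']

lemma st19_O (j : ℕ) (σ ε : ℝ) (hε : 0 < ε) :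
    (fun x : ℝ => x ^ σ * (max 1 (Real.log x)) ^ j) =O[atTop] fun x : ℝ => x ^ (σ + ε) := by
  have hlog : (fun x : ℝ => (Real.log x) ^ j) =o[atTop] fun x : ℝ => x ^ ε := by
    have := isLittleO_log_rpow_rpow_atTop (s := ε) (j : ℝ) hε
    refine this.congr' (by filter_upwards with x using by rw [Real.rpow_natCast]) (by rfl)
  have h1 : (fun x : ℝ => x ^ σ * (Real.log x) ^ j) =O[atTop] fun x => x ^ σ * x ^ ε :=
    (isBigO_refl _ _).mul hlog.isBigO
  have h2 : (fun x : ℝ => x ^ σ * x ^ ε) =ᶠ[atTop] fun x => x ^ (σ + ε) := by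
    filter_upwards [eventually_gt_atTop (0:ℝ)] with x hx
    rw [← Real.rpow_add hx]
  refine (h1.congr' ?_ h2)
  filter_upwards [eventually_ge_atTop (Real.exp 1)] with x hx
  have : (1:ℝ) ≤ Real.log x := by
    rw [← Real.log_exp 1]; exact Real.log_le_log (Real.exp_pos 1) hx
  rw [max_eq_right this]

lemma st19_alg (t : ℕ) (D : ℕ → ℝ) (hDtop : D (t+1) = 0) (a : ℝ) {s : ℂ} (hs : s ≠ (a:ℂ)) :
    s * ∑ i ∈ Finset.range (t+1),
        (D i : ℂ) * (a:ℂ)^i * ((i.factorial : ℂ) / (s - (a:ℂ))^(i+1))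
      = (D 0 : ℂ) + ∑ i ∈ Finset.Icc 1 (t+1),
          (a : ℂ) ^ i * ((i - 1).factorial : ℂ) *
            ((D (i - 1) : ℂ) + (i : ℂ) * (D i : ℂ)) / (s - (a:ℂ)) ^ i := by
  set u : ℂ := s - (a:ℂ) with hu_def
  have hu : u ≠ 0 := sub_ne_zero.mpr hs
  have e1 : s * ∑ i ∈ Finset.range (t+1),
        (D i : ℂ) * (a:ℂ)^i * ((i.factorial : ℂ) / u^(i+1))
      = (∑ i ∈ Finset.range (t+1), (D i : ℂ) * (a:ℂ)^i * (i.factorial : ℂ) / u^i)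
        + ∑ i ∈ Finset.range (t+1), (D i : ℂ) * (a:ℂ)^(i+1) * (i.factorial : ℂ) / u^(i+1) := by
    rw [show s = u + (a:ℂ) by rw [hu_def]; ring, Finset.mul_sum, ← Finset.sum_add_distrib]
    refine Finset.sum_congr rfl fun i _ => ?_
    have hui : u ^ (i+1) ≠ 0 := pow_ne_zero _ hu
    field_simp
    ring
  have e2 : (∑ i ∈ Finset.range (t+1), (D i : ℂ) * (a:ℂ)^i * (i.factorial : ℂ) / u^i)
      = (D 0 : ℂ) + ∑ i ∈ Finset.range t,
          (D (i+1) : ℂ) * (a:ℂ)^(i+1) * ((i+1).factorial : ℂ) / u^(i+1) := by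
    rw [Finset.sum_range_succ']
    simp [add_comm]
  have e3 : (∑ i ∈ Finset.Icc 1 (t+1), (a : ℂ) ^ i * ((i - 1).factorial : ℂ) *
        ((D (i - 1) : ℂ) + (i : ℂ) * (D i : ℂ)) / u ^ i)
      = (∑ i ∈ Finset.range (t+1), (D i : ℂ) * (a:ℂ)^(i+1) * (i.factorial : ℂ) / u^(i+1))
        + ∑ i ∈ Finset.range t,
          (D (i+1) : ℂ) * (a:ℂ)^(i+1) * ((i+1).factorial : ℂ) / u^(i+1) := by
    rw [show Finset.Icc 1 (t+1) = Finset.Ico 1 (t+1+1) from (Finset.Ico_add_one_right_eq_Icc 1 (t+1)).symm,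
      Finset.sum_Ico_eq_sum_range]
    simp only [Nat.add_sub_cancel, Nat.add_sub_cancel_left]
    rw [show (∑ i ∈ Finset.range t,
          (D (i+1) : ℂ) * (a:ℂ)^(i+1) * ((i+1).factorial : ℂ) / u^(i+1))
        = ∑ i ∈ Finset.range (t+1),
          (D (i+1) : ℂ) * (a:ℂ)^(i+1) * ((i+1).factorial : ℂ) / u^(i+1) by
      rw [Finset.sum_range_succ, hDtop]
      simp]
    rw [← Finset.sum_add_distrib]
    refine Finset.sum_congr rfl fun i _ => ?_
    push_cast [Nat.factorial_succ]
    ring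
  rw [e1, e2, e3]
  ring

/-- suppose `N(X) = Σ_{i=0}^{t} D_i X^a (log X^a)^i +
O(X^{a−1}(log⁺X)^t)` for a real `a > 1`, with `D_{t+1} = 0` (and `D_t ≠ 0`, so
the pole really has order `t+1`). Then `ζ(s) = s∫_1^∞ N(X) X^{−s−1} dX`
(defined for `Re s > a`) extends meromorphically to `Re s > a−1` with a single
pole at `s = a` of order `t+1`, and principal part
`Σ_{i=1}^{t+1} a^i (i−1)! (D_{i−1} + i·D_i)/(s−a)^i`: there is a function `h`
holomorphic on `{Re s > a−1}` such that `ζ(s) = h(s) + (principal part)` for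
`Re s > a`. -/
theorem statement19 (N : ℝ → ℝ) (hN : Measurable N)
    (a : ℝ) (ha : 1 < a) (t : ℕ) (D : ℕ → ℝ) (hDtop : D (t + 1) = 0)
    (hDt : D t ≠ 0) (C : ℝ)
    (hbound : ∀ X : ℝ, 1 ≤ X →
      |N X - ∑ i ∈ Finset.range (t + 1), D i * X ^ a * (Real.log (X ^ a)) ^ i| ≤
        C * X ^ (a - 1) * (max 1 (Real.log X)) ^ t) :
    ∃ h : ℂ → ℂ, DifferentiableOn ℂ h {s : ℂ | a - 1 < s.re} ∧
      ∀ s : ℂ, a < s.re →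
        s * ∫ X in Set.Ioi (1 : ℝ), (N X : ℂ) * (X : ℂ) ^ (-s - 1) =
          h s + ∑ i ∈ Finset.Icc 1 (t + 1),
            (a : ℂ) ^ i * ((i - 1).factorial : ℂ) *
              ((D (i - 1) : ℂ) + (i : ℂ) * (D i : ℂ)) / (s - (a : ℂ)) ^ i := by
  classical
  set M : ℝ → ℝ := fun X => ∑ i ∈ Finset.range (t + 1), D i * X ^ a * (Real.log (X ^ a)) ^ i
    with hM_def
  set E : ℝ → ℝ := fun X => N X - M X with hE_def
  set g : ℝ → ℂ := (Set.Ioi (1:ℝ)).indicator (fun X => ((E X : ℝ) : ℂ)) with hg_def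
  have hC : 0 ≤ C := by
    have := hbound 1 le_rfl
    simpa using (abs_nonneg _).trans this
  -- measurability of E
  have hMmeas : Measurable M := by
    apply Finset.measurable_sum
    intro i _
    apply Measurable.mul
    · exact measurable_const.mul (measurable_id.pow measurable_const)
    · exact (Real.measurable_log.comp (measurable_id.pow measurable_const)).pow measurable_const
  have hEmeas : Measurable E := hN.sub hMmeas
  have hgmeas : Measurable g := (Complex.measurable_ofReal.comp hEmeas).indicator measurableSet_Ioi
  -- pointwise bound for g
  have hgbound : ∀ X : ℝ, ‖g X‖ ≤ C * X ^ (a - 1) * (max 1 (Real.log X)) ^ t ∨ g X = 0 := by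
    intro X
    by_cases hX : X ∈ Set.Ioi (1:ℝ)
    · left
      rw [hg_def, Set.indicator_of_mem hX, Complex.norm_real, Real.norm_eq_abs]
      exact hbound X hX.out.le
    · right; rw [hg_def, Set.indicator_of_notMem hX]
  -- local integrability of g on (0,∞)
  have hBcont : ContinuousOn (fun X : ℝ => C * X ^ (a-1) * (max 1 (Real.log X)) ^ t)
      (Set.Ioi 0) := by
    apply ContinuousOn.mul
    · apply ContinuousOn.mul continuousOn_const
      intro x hx
      exact (Real.continuousAt_rpow_const x (a-1)
        (Or.inl (ne_of_gt hx))).continuousWithinAt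
    · refine ContinuousOn.pow ?_ t
      refine ContinuousOn.sup' continuousOn_const (Real.continuousOn_log.mono ?_)
      intro x hx
      simp only [Set.mem_compl_iff, Set.mem_singleton_iff]
      exact ne_of_gt hx
  have hgloc : LocallyIntegrableOn g (Set.Ioi (0:ℝ)) := by
    rw [locallyIntegrableOn_iff isOpen_Ioi.isLocallyClosed]
    intro K hK hKc
    refine Integrable.mono' (((hBcont.mono hK).integrableOn_compact hKc)) ?_ ?_
    · exact hgmeas.aestronglyMeasurable.restrict
    · filter_upwards [ae_restrict_mem hKc.measurableSet] with x hx
      rcases hgbound x with h | h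
      · exact h
      · rw [h, norm_zero]
        have hx0 : (0:ℝ) < x := hK hx
        have : (0:ℝ) < max 1 (Real.log x) := lt_of_lt_of_le one_pos (le_max_left _ _)
        positivity
  -- mellin g (-s) as an integral over (1,∞)
  have hmel_eq : ∀ s : ℂ, mellin g (-s)
      = ∫ X in Set.Ioi (1:ℝ), ((E X : ℝ) : ℂ) * (X:ℂ) ^ (-s - 1) := by
    intro s
    have h0 : mellin g (-s) = ∫ X in Set.Ioi (0:ℝ), (X:ℂ) ^ (-s - 1) • g X := rfl
    rw [h0]
    have hpt : ∀ X : ℝ, (X:ℂ) ^ (-s - 1) • g X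
        = (Set.Ioi (1:ℝ)).indicator (fun X => ((E X : ℝ) : ℂ) * (X:ℂ) ^ (-s - 1)) X := by
      intro X
      by_cases hX : X ∈ Set.Ioi (1:ℝ)
      · rw [hg_def, Set.indicator_of_mem hX, Set.indicator_of_mem hX, smul_eq_mul, mul_comm]
      · rw [hg_def, Set.indicator_of_notMem hX, Set.indicator_of_notMem hX, smul_zero]
    simp_rw [hpt]
    rw [MeasureTheory.setIntegral_indicator measurableSet_Ioi,
      Set.inter_eq_right.mpr (Set.Ioi_subset_Ioi zero_le_one)]
  refine ⟨fun s => (D 0 : ℂ) + s * mellin g (-s), ?_, ?_⟩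
  · -- differentiability
    intro s hs
    simp only [Set.mem_setOf_eq] at hs
    apply DifferentiableAt.differentiableWithinAt
    refine (differentiableAt_const _).add (differentiableAt_id.mul ?_)
    set ε : ℝ := (s.re - (a - 1)) / 2 with hε_def
    have hε : 0 < ε := by rw [hε_def]; linarith
    have hP : g =O[atTop] fun x : ℝ => x ^ (a-1) * (max 1 (Real.log x)) ^ t := by
      rw [Asymptotics.isBigO_iff]
      refine ⟨C, ?_⟩
      filter_upwards [eventually_gt_atTop (1:ℝ)] with x hx
      have hx0 : (0:ℝ) < x := lt_trans one_pos hx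
      have hnn : (0:ℝ) ≤ x ^ (a-1) * (max 1 (Real.log x)) ^ t := by
        have : (0:ℝ) < max 1 (Real.log x) := lt_of_lt_of_le one_pos (le_max_left _ _)
        positivity
      rw [Real.norm_eq_abs, abs_of_nonneg hnn]
      rcases hgbound x with h | h
      · calc ‖g x‖ ≤ C * x ^ (a-1) * (max 1 (Real.log x)) ^ t := h
          _ = C * (x ^ (a-1) * (max 1 (Real.log x)) ^ t) := by ring
      · rw [h, norm_zero]; positivity
    have hOtop : g =O[atTop] fun x : ℝ => x ^ (-(1 - a - ε)) := by
      rw [show -(1 - a - ε) = (a - 1) + ε by ring]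
      exact hP.trans (st19_O t (a-1) ε hε)
    have hObot : g =O[nhdsWithin (0:ℝ) (Set.Ioi 0)] fun x : ℝ => x ^ (-(-s.re - 1)) := by
      rw [Asymptotics.isBigO_iff]
      refine ⟨0, ?_⟩
      filter_upwards [Ioo_mem_nhdsGT_of_mem (Set.left_mem_Ico.mpr zero_lt_one)] with x hx
      have : g x = 0 := by
        rw [hg_def, Set.indicator_of_notMem]
        simp only [Set.mem_Ioi, not_lt]
        exact hx.2.le
      rw [this, norm_zero]
      positivity
    have hdiff : DifferentiableAt ℂ (mellin g) (-s) := by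
      refine mellin_differentiableAt_of_isBigO_rpow hgloc hOtop ?_ hObot ?_
      · rw [Complex.neg_re]; rw [hε_def]; linarith
      · rw [Complex.neg_re]; linarith
    exact hdiff.comp s differentiableAt_id.neg
  · -- the main identity
    intro s hs
    have hsa : 0 < (s - (a:ℂ)).re := by
      simp only [Complex.sub_re, Complex.ofReal_re]; linarith
    have hsne : s ≠ (a:ℂ) := by
      intro h
      rw [h, Complex.ofReal_re] at hs
      exact lt_irrefl a hs
    have hpt : ∀ X ∈ Set.Ioi (1:ℝ), (N X : ℂ) * (X:ℂ) ^ (-s - 1)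
        = (∑ i ∈ Finset.range (t+1), (D i : ℂ) * (a:ℂ)^i *
            ((Real.log X : ℂ)^i * (X:ℂ) ^ (-(s - (a:ℂ)) - 1)))
          + ((E X : ℝ) : ℂ) * (X:ℂ) ^ (-s - 1) := by
      intro X hX
      have hX0 : (0:ℝ) < X := lt_trans one_pos hX
      have hXC : (X:ℂ) ≠ 0 := Complex.ofReal_ne_zero.mpr hX0.ne'
      have hNX : (N X : ℂ) = (M X : ℂ) + ((E X : ℝ) : ℂ) := by
        rw [hE_def]; push_cast; ring
      rw [hNX, add_mul]
      congr 1
      have hMX : (M X : ℂ) = ∑ i ∈ Finset.range (t+1),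
          (D i : ℂ) * (X:ℂ) ^ (a:ℂ) * ((a:ℂ) * (Real.log X : ℂ))^i := by
        rw [hM_def]
        push_cast [Real.log_rpow hX0, Complex.ofReal_cpow hX0.le]
        exact Finset.sum_congr rfl fun i _ => by ring
      rw [hMX, Finset.sum_mul]
      refine Finset.sum_congr rfl fun i _ => ?_
      rw [show -(s - (a:ℂ)) - 1 = (a:ℂ) + (-s - 1) by ring, Complex.cpow_add _ _ hXC]
      rw [mul_pow]
      ring
    have hsumInt : IntegrableOn (fun X : ℝ => ∑ i ∈ Finset.range (t+1),
        (D i : ℂ) * (a:ℂ)^i * ((Real.log X : ℂ)^i * (X:ℂ) ^ (-(s - (a:ℂ)) - 1)))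
        (Set.Ioi 1) :=
      integrable_finset_sum _ fun i _ => (st19_intC i hsa).const_mul _
    have hEint : IntegrableOn (fun X : ℝ => ((E X : ℝ) : ℂ) * (X:ℂ) ^ (-s - 1))
        (Set.Ioi 1) := by
      refine Integrable.mono'
        ((st19_intAux t (show a - s.re - 2 < -1 by linarith)).const_mul C) ?_ ?_
      · exact ((Complex.measurable_ofReal.comp hEmeas).aestronglyMeasurable.restrict).mul
          ((st19_contC (-s-1)).aestronglyMeasurable measurableSet_Ioi)
      · filter_upwards [ae_restrict_mem measurableSet_Ioi] with X hX
        have hX0 : (0:ℝ) < X := lt_trans one_pos hX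
        rw [norm_mul, Complex.norm_real, Real.norm_eq_abs,
          Complex.norm_cpow_eq_rpow_re_of_pos hX0]
        have h2 : ((-s - 1 : ℂ)).re = -s.re - 1 := by
          simp [Complex.sub_re, Complex.neg_re]
        rw [h2]
        calc |E X| * X ^ (-s.re - 1)
            ≤ (C * X ^ (a-1) * (max 1 (Real.log X)) ^ t) * X ^ (-s.re - 1) := by
              apply mul_le_mul_of_nonneg_right (hbound X hX.out.le)
                (Real.rpow_nonneg hX0.le _)
          _ = C * ((max 1 (Real.log X)) ^ t * (X ^ (a-1) * X ^ (-s.re - 1))) := by ring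
          _ = C * ((max 1 (Real.log X)) ^ t * X ^ (a - s.re - 2)) := by
              rw [← Real.rpow_add hX0, show a - 1 + (-s.re - 1) = a - s.re - 2 by ring]
    have hIeq : (∫ X in Set.Ioi (1:ℝ), (N X : ℂ) * (X:ℂ) ^ (-s - 1))
        = (∑ i ∈ Finset.range (t+1), (D i : ℂ) * (a:ℂ)^i *
            ((i.factorial : ℂ) / (s - (a:ℂ))^(i+1))) + mellin g (-s) := by
      rw [MeasureTheory.setIntegral_congr_fun measurableSet_Ioi hpt,
        MeasureTheory.integral_add hsumInt hEint]
      congr 1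
      · rw [MeasureTheory.integral_finset_sum _ fun i _ => (st19_intC i hsa).const_mul _]
        refine Finset.sum_congr rfl fun i _ => ?_
        rw [MeasureTheory.integral_const_mul, st19_key i hsa]
      · exact (hmel_eq s).symm
    rw [hIeq, mul_add, st19_alg t D hDtop a hsne]
    ring
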